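/- The single-qubit shadow estimator applied to a weight-w Pauli observable is unbiased and has variance at most 3^w: if each qubit is measured in a uniformly random Pauli basis, the estimator ô = Π_{n∈supp(O)} 3·λ_n·1[W_n = P_n] (where λ_n = ±1 is the measurement outcome eigenvalue, and ô = 0 if incompatible) satisfies E[ô] = tr(Oρ) and E[ô²] ≤ 3^w. -/

import Mathlib

open Matrix
open scoped Classical ComplexOrder

noncomputable section

/-- The Pauli matrices X, Y, Z. -/
def PauliXYZ : Fin 3 → Matrix (Fin 2) (Fin 2) ℂ
  | 0 => !![0, 1; 1, 0]
  | 1 => !![0, -Complex.I; Complex.I, 0]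
  | 2 => !![1, 0; 0, -1]

/-- Eigenprojector `(I ± W)/2` of the Pauli matrix `W` (sign `+` for `b = true`). -/
def pauliProj (w : Fin 3) (b : Bool) : Matrix (Fin 2) (Fin 2) ℂ :=
  (2 : ℂ)⁻¹ • (1 + (if b then (1 : ℂ) else -1) • PauliXYZ w)

/-- A Pauli (`some w`) or the identity (`none`) on one qubit. -/
def pauliOfOpt : Option (Fin 3) → Matrix (Fin 2) (Fin 2) ℂ
  | none => 1
  | some w => PauliXYZ w

/-- Tensor-product projector onto outcome `lam` of the product Pauli-basis
measurement in bases `W`. -/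
def projN {N : ℕ} (W : Fin N → Fin 3) (lam : Fin N → Bool) :
    Matrix (Fin N → Fin 2) (Fin N → Fin 2) ℂ :=
  fun x y => ∏ n, pauliProj (W n) (lam n) (x n) (y n)

/-- The Pauli observable `O = P₁ ⊗ ⋯ ⊗ P_N` as a matrix. -/
def obsMat {N : ℕ} (O : Fin N → Option (Fin 3)) :
    Matrix (Fin N → Fin 2) (Fin N → Fin 2) ℂ :=
  fun x y => ∏ n, pauliOfOpt (O n) (x n) (y n)

/-- Weight of the Pauli observable: the number of qubits where it is not the identity. -/
def weight {N : ℕ} (O : Fin N → Option (Fin 3)) : ℕ :=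
  (Finset.univ.filter fun n => O n ≠ none).card

/-- The classical-shadow estimator for `O`: `3^w` times the product of outcome
signs over the support of `O` if the setting `W` is compatible with `O`, else `0`. -/
def shadowEst {N : ℕ} (O : Fin N → Option (Fin 3)) (W : Fin N → Fin 3)
    (lam : Fin N → Bool) : ℝ :=
  if ∀ n p, O n = some p → W n = p then
    3 ^ weight O *
      ∏ n ∈ Finset.univ.filter (fun n => O n ≠ none), (if lam n then (1 : ℝ) else -1)
  else 0

/-- Born probability of outcome `lam` when measuring `ρ` in the product basis `W`. -/
def born {N : ℕ} (ρ : Matrix (Fin N → Fin 2) (Fin N → Fin 2) ℂ)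
    (W : Fin N → Fin 3) (lam : Fin N → Bool) : ℝ :=
  ((ρ * projN W lam).trace).re

/-! ### Auxiliary lemmas -/

lemma sum_pi_prod {N : ℕ} (G : Fin N → Fin 3 → Bool → ℂ) :
    ∑ W : Fin N → Fin 3, ∑ lam : Fin N → Bool, ∏ n, G n (W n) (lam n)
    = ∏ n, ∑ w, ∑ b, G n w b := by
  have h1 : ∀ n, (∑ w, ∑ b, G n w b) = ∑ q : Fin 3 × Bool, G n q.1 q.2 := by
    intro n; rw [Fintype.sum_prod_type]
  simp_rw [h1]
  rw [Finset.prod_univ_sum, Fintype.piFinset_univ,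
    ← Equiv.sum_comp (Equiv.arrowProdEquivProdArrow (Fin N) (fun _ => Fin 3) (fun _ => Bool)).symm
      (fun F : Fin N → Fin 3 × Bool => ∏ n, G n (F n).1 (F n).2),
    Fintype.sum_prod_type]
  rfl

lemma sum_swap4 {α β γ δ M : Type*} [Fintype α] [Fintype β] [Fintype γ] [Fintype δ]
    [AddCommMonoid M] (g : α → β → γ → δ → M) :
    ∑ a : α, ∑ b : β, ∑ c : γ, ∑ d : δ, g a b c d
    = ∑ c : γ, ∑ d : δ, ∑ a : α, ∑ b : β, g a b c d := by
  calc ∑ a : α, ∑ b : β, ∑ c : γ, ∑ d : δ, g a b c d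
      = ∑ a : α, ∑ c : γ, ∑ b : β, ∑ d : δ, g a b c d :=
        Finset.sum_congr rfl fun _ _ => Finset.sum_comm
    _ = ∑ a : α, ∑ c : γ, ∑ d : δ, ∑ b : β, g a b c d :=
        Finset.sum_congr rfl fun _ _ => Finset.sum_congr rfl fun _ _ => Finset.sum_comm
    _ = ∑ c : γ, ∑ a : α, ∑ d : δ, ∑ b : β, g a b c d := Finset.sum_comm
    _ = ∑ c : γ, ∑ d : δ, ∑ a : α, ∑ b : β, g a b c d :=
        Finset.sum_congr rfl fun _ _ => Finset.sum_comm

/-- The central summation identity. -/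
lemma key_sum {N : ℕ} (ρ : Matrix (Fin N → Fin 2) (Fin N → Fin 2) ℂ)
    (c : Fin N → Fin 3 → Bool → ℂ) :
    (3:ℂ)⁻¹ ^ N * ∑ W : Fin N → Fin 3, ∑ lam : Fin N → Bool,
        (ρ * projN W lam).trace * ∏ n, c n (W n) (lam n)
    = (ρ * Matrix.of (fun x y : Fin N → Fin 2 =>
        ∏ n, ((3:ℂ)⁻¹ • ∑ w, ∑ b, c n w b • pauliProj w b) (x n) (y n))).trace := by
  have tr : ∀ (M : Matrix (Fin N → Fin 2) (Fin N → Fin 2) ℂ),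
      (ρ * M).trace = ∑ x, ∑ y, ρ x y * M y x := by
    intro M; simp [Matrix.trace, Matrix.mul_apply, Matrix.diag, Finset.mul_sum]
  rw [tr]; simp_rw [tr]
  simp_rw [projN, Finset.sum_mul, Finset.mul_sum]
  rw [sum_swap4]
  congr 1; funext x; congr 1; funext y
  have step : ∀ (W : Fin N → Fin 3) (lam : Fin N → Bool),
      (3:ℂ)⁻¹ ^ N * (ρ x y * (∏ n, pauliProj (W n) (lam n) (y n) (x n)) * ∏ n, c n (W n) (lam n))
      = ρ x y * ∏ n, ((3:ℂ)⁻¹ * (c n (W n) (lam n) * pauliProj (W n) (lam n) (y n) (x n))) := by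
    intro W lam
    have h : ∏ n, ((3:ℂ)⁻¹ * (c n (W n) (lam n) * pauliProj (W n) (lam n) (y n) (x n)))
        = (3:ℂ)⁻¹ ^ N * ((∏ n, c n (W n) (lam n)) * ∏ n, pauliProj (W n) (lam n) (y n) (x n)) := by
      rw [Finset.prod_mul_distrib, Finset.prod_mul_distrib, Finset.prod_const,
        Finset.card_univ, Fintype.card_fin]
    rw [h]; ring
  simp_rw [step, ← Finset.mul_sum]
  congr 1
  rw [sum_pi_prod (fun n w b => (3:ℂ)⁻¹ * (c n w b * pauliProj w b (y n) (x n)))]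
  apply Finset.prod_congr rfl; intro n _
  simp only [Matrix.smul_apply, Matrix.sum_apply, Matrix.add_apply, smul_eq_mul,
    Finset.mul_sum, Fintype.sum_bool]
  apply Finset.sum_congr rfl; intro w _; ring

/-- One-qubit factor of the shadow estimator. -/
def crOpt : Option (Fin 3) → Fin 3 → Bool → ℝ
  | none => fun _ _ => 1
  | some p => fun w b => if w = p then 3 * (if b then (1:ℝ) else -1) else 0

lemma shadowEst_eq_prod {N : ℕ} (O : Fin N → Option (Fin 3)) (W : Fin N → Fin 3)
    (lam : Fin N → Bool) :
    shadowEst O W lam = ∏ n, crOpt (O n) (W n) (lam n) := by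
  unfold shadowEst
  split
  case isTrue h =>
    rw [← Finset.prod_filter_mul_prod_filter_not Finset.univ (fun n => O n ≠ none)]
    have h2 : ∏ n ∈ Finset.univ.filter (fun n => ¬ O n ≠ none),
        crOpt (O n) (W n) (lam n) = 1 := by
      apply Finset.prod_eq_one
      intro n hn
      simp only [Finset.mem_filter, not_not] at hn
      rw [hn.2]; rfl
    rw [h2, mul_one]
    have h3 : ∀ n ∈ Finset.univ.filter (fun n => O n ≠ none),
        crOpt (O n) (W n) (lam n) = 3 * (if lam n then (1:ℝ) else -1) := by
      intro n hn
      simp only [Finset.mem_filter] at hn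
      obtain ⟨p, hp⟩ := Option.ne_none_iff_exists'.mp hn.2
      rw [hp]; show (if W n = p then 3 * (if lam n then (1:ℝ) else -1) else 0) = _
      rw [if_pos (h n p hp)]
    rw [Finset.prod_congr rfl h3, Finset.prod_mul_distrib, Finset.prod_const]
    rfl
  case isFalse h =>
    push_neg at h
    obtain ⟨n, p, hp, hw⟩ := h
    rw [eq_comm]
    apply Finset.prod_eq_zero (Finset.mem_univ n)
    rw [hp]
    exact if_neg hw

lemma sum_proj (w : Fin 3) : ∑ b : Bool, pauliProj w b = 1 := by
  simp only [Fintype.sum_bool, pauliProj, Bool.false_eq_true, if_true, if_false]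
  module

lemma mm_eval (o : Option (Fin 3)) :
    (3:ℂ)⁻¹ • (∑ w, ∑ b, (((crOpt o w b : ℝ)) : ℂ) • pauliProj w b) = pauliOfOpt o := by
  cases o with
  | none =>
    simp only [crOpt, Complex.ofReal_one, one_smul]
    simp_rw [sum_proj]
    rw [Fin.sum_univ_three]
    show (3:ℂ)⁻¹ • ((1:Matrix (Fin 2) (Fin 2) ℂ) + 1 + 1) = 1
    module
  | some p =>
    simp only [crOpt, pauliOfOpt]
    have h1 : ∀ w : Fin 3,
        (∑ b : Bool, (((if w = p then 3 * (if b then (1:ℝ) else -1) else 0 : ℝ)) : ℂ) • pauliProj w b)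
        = if w = p then (3:ℂ) • PauliXYZ p else 0 := by
      intro w
      by_cases hw : w = p
      · subst hw
        simp only [if_pos rfl, Fintype.sum_bool, Bool.false_eq_true, if_true, if_false]
        push_cast
        simp only [pauliProj, Bool.false_eq_true, if_true, if_false]
        module
      · simp [hw]
    simp_rw [h1]
    rw [Finset.sum_ite_eq' Finset.univ p, if_pos (Finset.mem_univ p), smul_smul]
    norm_num

lemma mm2_eval (o : Option (Fin 3)) :
    (3:ℂ)⁻¹ • (∑ w, ∑ b, (((crOpt o w b ^ 2 : ℝ)) : ℂ) • pauliProj w b)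
    = (if o = none then (1:ℂ) else 3) • 1 := by
  cases o with
  | none =>
    simp only [crOpt, one_pow, Complex.ofReal_one, one_smul, if_pos rfl]
    simp_rw [sum_proj]
    rw [Fin.sum_univ_three]
    show (3:ℂ)⁻¹ • ((1:Matrix (Fin 2) (Fin 2) ℂ) + 1 + 1) = (1:ℂ) • 1
    module
  | some p =>
    rw [if_neg (Option.some_ne_none p)]
    have h1 : ∀ w : Fin 3,
        (∑ b : Bool, (((crOpt (some p) w b ^ 2 : ℝ)) : ℂ) • pauliProj w b)
        = if w = p then (9:ℂ) • (1 : Matrix (Fin 2) (Fin 2) ℂ) else 0 := by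
      intro w
      by_cases hw : w = p
      · subst hw
        have hs : pauliProj w true + pauliProj w false = 1 := by
          have := sum_proj w; rwa [Fintype.sum_bool] at this
        simp only [crOpt, if_pos rfl, Fintype.sum_bool, Bool.false_eq_true, if_true, if_false]
        norm_num
        rw [← smul_add, hs]
      · simp [crOpt, hw]
    simp_rw [h1]
    rw [Finset.sum_ite_eq' Finset.univ p, if_pos (Finset.mem_univ p), smul_smul]
    norm_num

lemma M2_eq {N : ℕ} (O : Fin N → Option (Fin 3)) :
    Matrix.of (fun x y : Fin N → Fin 2 =>
      ∏ n, (((if O n = none then (1:ℂ) else 3)) • (1 : Matrix (Fin 2) (Fin 2) ℂ)) (x n) (y n))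
    = ((3:ℂ) ^ weight O) • 1 := by
  funext x y
  simp only [Matrix.of_apply, Matrix.smul_apply, Matrix.one_apply, smul_eq_mul, mul_ite,
    mul_one, mul_zero]
  rw [show (∏ n, if x n = y n then (if O n = none then (1:ℂ) else 3) else 0)
      = ∏ n, ((if O n = none then (1:ℂ) else 3) * (if x n = y n then (1:ℂ) else 0)) from
      Finset.prod_congr rfl fun n _ => by by_cases h : x n = y n <;> simp [h]]
  rw [Finset.prod_mul_distrib, Finset.prod_boole, Finset.prod_ite, Finset.prod_const_one,
    one_mul, Finset.prod_const]
  have hcard : (Finset.univ.filter fun n => ¬ O n = none).card = weight O := rfl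
  rw [hcard]
  by_cases hxy : x = y
  · subst hxy; simp
  · rw [if_neg (by simpa [funext_iff] using hxy), if_neg hxy]
    ring

/-- The single-shot random-Pauli-basis shadow estimator of a weight-`w` Pauli
observable is unbiased, `E[ô] = tr(Oρ)`, and its second moment is at most `3^w`. -/
theorem shadow_estimator_unbiased_and_variance
    {N : ℕ} (ρ : Matrix (Fin N → Fin 2) (Fin N → Fin 2) ℂ)
    (hρ : ρ.PosSemidef) (hτ : ρ.trace = 1) (O : Fin N → Option (Fin 3)) :
    ((3 : ℝ)⁻¹ ^ N * ∑ W : Fin N → Fin 3, ∑ lam : Fin N → Bool,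
        born ρ W lam * shadowEst O W lam = ((obsMat O * ρ).trace).re)
    ∧ (3 : ℝ)⁻¹ ^ N * ∑ W : Fin N → Fin 3, ∑ lam : Fin N → Bool,
        born ρ W lam * (shadowEst O W lam) ^ 2 ≤ 3 ^ weight O := by
  have hcast : (((3:ℝ)⁻¹ ^ N : ℝ) : ℂ) = (3:ℂ)⁻¹ ^ N := by push_cast; ring
  constructor
  · -- unbiasedness
    have e1 : ∀ (W : Fin N → Fin 3) (lam : Fin N → Bool),
        born ρ W lam * shadowEst O W lam
        = ((ρ * projN W lam).trace * ((shadowEst O W lam : ℝ) : ℂ)).re := by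
      intro W lam
      rw [mul_comm ((ρ * projN W lam).trace), Complex.re_ofReal_mul, born, mul_comm]
    simp_rw [e1, ← Complex.re_sum, ← Complex.re_ofReal_mul]
    congr 1
    rw [hcast]
    have e2 : ∀ (W : Fin N → Fin 3) (lam : Fin N → Bool),
        ((shadowEst O W lam : ℝ) : ℂ) = ∏ n, (((crOpt (O n) (W n) (lam n) : ℝ)) : ℂ) := by
      intro W lam; rw [shadowEst_eq_prod]; push_cast; rfl
    simp_rw [e2]
    rw [key_sum ρ (fun n w b => (((crOpt (O n) w b : ℝ)) : ℂ))]
    rw [show Matrix.of (fun x y : Fin N → Fin 2 =>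
        ∏ n, ((3:ℂ)⁻¹ • ∑ w, ∑ b, (((crOpt (O n) w b : ℝ)) : ℂ) • pauliProj w b) (x n) (y n))
        = obsMat O from by
      funext x y
      simp only [Matrix.of_apply, obsMat]
      exact Finset.prod_congr rfl fun n _ => by rw [mm_eval]]
    rw [Matrix.trace_mul_comm]
  · -- second moment
    have e1 : ∀ (W : Fin N → Fin 3) (lam : Fin N → Bool),
        born ρ W lam * (shadowEst O W lam) ^ 2
        = ((ρ * projN W lam).trace * (((shadowEst O W lam) ^ 2 : ℝ) : ℂ)).re := by
      intro W lam
      rw [mul_comm ((ρ * projN W lam).trace), Complex.re_ofReal_mul, born, mul_comm]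
    have e2 : ∀ (W : Fin N → Fin 3) (lam : Fin N → Bool),
        (((shadowEst O W lam) ^ 2 : ℝ) : ℂ) = ∏ n, (((crOpt (O n) (W n) (lam n) ^ 2 : ℝ)) : ℂ) := by
      intro W lam
      rw [shadowEst_eq_prod, ← Finset.prod_pow]; push_cast; rfl
    have key : (3 : ℝ)⁻¹ ^ N * ∑ W : Fin N → Fin 3, ∑ lam : Fin N → Bool,
        born ρ W lam * (shadowEst O W lam) ^ 2 = ((3:ℝ) ^ weight O : ℝ) := by
      simp_rw [e1, ← Complex.re_sum, ← Complex.re_ofReal_mul]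
      rw [hcast]
      simp_rw [e2]
      rw [key_sum ρ (fun n w b => (((crOpt (O n) w b ^ 2 : ℝ)) : ℂ))]
      rw [show Matrix.of (fun x y : Fin N → Fin 2 =>
          ∏ n, ((3:ℂ)⁻¹ • ∑ w, ∑ b, (((crOpt (O n) w b ^ 2 : ℝ)) : ℂ) • pauliProj w b) (x n) (y n))
          = ((3:ℂ) ^ weight O) • 1 from by
        rw [← M2_eq O]
        funext x y
        simp only [Matrix.of_apply]
        exact Finset.prod_congr rfl fun n _ => by rw [mm2_eval]]
      rw [Matrix.mul_smul, Matrix.mul_one, Matrix.trace_smul, hτ, smul_eq_mul, mul_one]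
      rw [show ((3:ℂ) ^ weight O) = (((3:ℝ) ^ weight O : ℝ) : ℂ) by push_cast; ring,
        Complex.ofReal_re]
    rw [key]
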